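/- The observable operators are contractions for the L²-type norm: for each a ∈ O and each g ∈ 𝒢, ‖t_a g‖² = lim_{n→∞} Σ_{ā∈O^n} (t_a g)(ā)²/g_ε(ā) ≤ ‖g‖², assuming all the limits exist. The key chain of estimates is Σ_{ā∈O^n} g(aā)²/g_ε(ā) ≤ Σ_{ā∈O^n} g(aā)²/g_ε(aā) ≤ Σ_{b̄∈O^{n+1}} g(b̄)²/g_ε(b̄), using (t_a g)(ā) = g(aā) and g_ε(aā) ≤ g_ε(ā). -/
import Mathlib


open Filter

theorem stmt16 {O : Type*} [Countable O] (ge g : List O → ℝ) (a : O)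
    (hge0 : ∀ w, 0 ≤ ge w)
    (hstat : ∀ w : List O, ge (a :: w) ≤ ge w)
    (hzero : ∀ w : List O, ge w = 0 → g w = 0)
    (hsum : ∀ n : ℕ, Summable (fun w : {w : List O // w.length = n} => g w.1 ^ 2 / ge w.1))
    (Ng Nt : ℝ)
    (hNg : Tendsto (fun n => ∑' w : {w : List O // w.length = n}, g w.1 ^ 2 / ge w.1)
      atTop (nhds Ng))
    (hNt : Tendsto (fun n => ∑' w : {w : List O // w.length = n}, g (a :: w.1) ^ 2 / ge w.1)
      atTop (nhds Nt)) :
    Nt ≤ Ng := by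
  have key : ∀ n : ℕ,
      (∑' w : {w : List O // w.length = n}, g (a :: w.1) ^ 2 / ge w.1) ≤
      (∑' w : {w : List O // w.length = n + 1}, g w.1 ^ 2 / ge w.1) := by
    intro n
    set i : {w : List O // w.length = n} → {w : List O // w.length = n + 1} :=
      fun w => ⟨a :: w.1, by simp [w.2]⟩ with hi
    have hinj : Function.Injective i := by
      intro x y h
      apply Subtype.ext
      have := congrArg Subtype.val h
      simpa [hi] using this
    have hle : ∀ w : {w : List O // w.length = n},
        g (a :: w.1) ^ 2 / ge w.1 ≤ g ((i w).1) ^ 2 / ge ((i w).1) := by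
      intro w
      rcases eq_or_lt_of_le (hge0 (a :: w.1)) with h0 | hpos
      · have : g (a :: w.1) = 0 := hzero _ h0.symm
        simp [hi, this]
      · exact div_le_div_of_nonneg_left (sq_nonneg _) hpos (hstat w.1)
    have hnonneg : ∀ w : {w : List O // w.length = n}, 0 ≤ g (a :: w.1) ^ 2 / ge w.1 :=
      fun w => div_nonneg (sq_nonneg _) (hge0 _)
    have hsummf : Summable (fun w : {w : List O // w.length = n} => g (a :: w.1) ^ 2 / ge w.1) := by
      refine Summable.of_nonneg_of_le hnonneg hle ?_
      exact ((hsum (n + 1)).comp_injective hinj)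
    refine Summable.tsum_le_tsum_of_inj i hinj (fun c _ => div_nonneg (sq_nonneg _) (hge0 _)) hle
      hsummf (hsum (n + 1))
  have hNg' : Tendsto (fun n => ∑' w : {w : List O // w.length = n + 1}, g w.1 ^ 2 / ge w.1)
      atTop (nhds Ng) := hNg.comp (tendsto_add_atTop_nat 1)
  exact le_of_tendsto_of_tendsto' hNt hNg' key
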